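/- arXiv:math-ph/0101007 — 3 statements merged into one kernel-verified Lean document; each statement's English description precedes it below -/
import Mathlib

section
/- For multi-indices m, n, s in ℕ^N and a unit multi-index μ, C(m,n)·C(n+μ, s) = C(m,s)·C(m-s, m-n) + C(m,n)·C(n, s-μ), where C denotes the multi-dimensional binomial coefficient. -/
/-- Binomial coefficient with integer arguments, with the convention that it
vanishes when the lower index is negative or exceeds the upper index. -/
def zchoose (a b : ℤ) : ℕ := if 0 ≤ b ∧ b ≤ a then a.toNat.choose b.toNat else 0

/-- Multi-dimensional binomial coefficient with integer entries. -/
def multiBinomZ {N : ℕ} (a b : Fin N → ℤ) : ℕ := ∏ i, zchoose (a i) (b i)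

/-- Unit multi-index in direction `μ`. -/
def unitIdx {N : ℕ} (μ : Fin N) : Fin N → ℤ := fun i => if i = μ then 1 else 0

lemma zchoose_natCast (a b : ℕ) : zchoose (a : ℤ) (b : ℤ) = a.choose b := by
  unfold zchoose
  split
  · simp
  · next h =>
    push_neg at h
    have : a < b := by exact_mod_cast h (by positivity)
    exact (Nat.choose_eq_zero_of_lt this).symm

lemma zchoose_pascal (a b : ℕ) :
    zchoose ((a : ℤ) + 1) (b : ℤ) = zchoose a b + zchoose a ((b : ℤ) - 1) := by
  cases b with
  | zero =>
    simp [zchoose]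
    positivity
  | succ t =>
    have h1 : ((a : ℤ) + 1) = ((a + 1 : ℕ) : ℤ) := by push_cast; ring
    have h2 : ((t + 1 : ℕ) : ℤ) - 1 = (t : ℤ) := by push_cast; ring
    rw [h1, h2, zchoose_natCast, zchoose_natCast, zchoose_natCast,
      Nat.choose_succ_succ', Nat.add_comm]

lemma zkey (a b c : ℕ) :
    zchoose (a : ℤ) (b : ℤ) * zchoose (b : ℤ) (c : ℤ) =
      zchoose (a : ℤ) (c : ℤ) * zchoose ((a : ℤ) - c) ((a : ℤ) - b) := by
  rw [zchoose_natCast, zchoose_natCast, zchoose_natCast]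
  by_cases hba : b ≤ a
  · by_cases hcb : c ≤ b
    · have hca : c ≤ a := hcb.trans hba
      have h1 : ((a : ℤ) - c) = ((a - c : ℕ) : ℤ) := by rw [Nat.cast_sub hca]
      have h2 : ((a : ℤ) - b) = ((a - b : ℕ) : ℤ) := by rw [Nat.cast_sub hba]
      rw [h1, h2, zchoose_natCast, Nat.choose_mul hcb]
      congr 1
      have h3 : a - b = (a - c) - (b - c) := by omega
      rw [h3, Nat.choose_symm (by omega)]
    · rw [Nat.choose_eq_zero_of_lt (by omega : b < c), mul_zero]
      unfold zchoose
      split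
      · next h => exfalso; omega
      · simp
  · rw [Nat.choose_eq_zero_of_lt (by omega : a < b), zero_mul]
    unfold zchoose
    split
    · next h => exfalso; omega
    · simp

theorem multiBinom_lemma_L3 {N : ℕ} (m n s : Fin N → ℕ) (μ : Fin N) :
    multiBinomZ (fun i => (m i : ℤ)) (fun i => (n i : ℤ)) *
      multiBinomZ (fun i => (n i : ℤ) + unitIdx μ i) (fun i => (s i : ℤ)) =
    multiBinomZ (fun i => (m i : ℤ)) (fun i => (s i : ℤ)) *
      multiBinomZ (fun i => (m i : ℤ) - s i) (fun i => (m i : ℤ) - n i) +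
    multiBinomZ (fun i => (m i : ℤ)) (fun i => (n i : ℤ)) *
      multiBinomZ (fun i => (n i : ℤ)) (fun i => (s i : ℤ) - unitIdx μ i) := by
  unfold multiBinomZ
  rw [← Finset.prod_mul_distrib, ← Finset.prod_mul_distrib, ← Finset.prod_mul_distrib]
  have hfirst : (∏ i, zchoose (m i : ℤ) (s i : ℤ) *
      zchoose ((m i : ℤ) - s i) ((m i : ℤ) - n i)) =
      ∏ i, zchoose (m i : ℤ) (n i : ℤ) * zchoose (n i : ℤ) (s i : ℤ) :=
    Finset.prod_congr rfl fun i _ => (zkey (m i) (n i) (s i)).symm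
  rw [hfirst]
  have e1 : (∏ i, zchoose (m i : ℤ) (n i : ℤ) *
      zchoose ((n i : ℤ) + unitIdx μ i) (s i : ℤ)) =
      (zchoose (m μ : ℤ) (n μ : ℤ) * zchoose ((n μ : ℤ) + 1) (s μ : ℤ)) *
        ∏ i ∈ Finset.univ.erase μ,
          zchoose (m i : ℤ) (n i : ℤ) * zchoose (n i : ℤ) (s i : ℤ) := by
    rw [← Finset.mul_prod_erase Finset.univ _ (Finset.mem_univ μ)]
    congr 1
    · simp [unitIdx]
    · refine Finset.prod_congr rfl fun i hi => ?_
      have hiμ : i ≠ μ := (Finset.mem_erase.mp hi).1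
      simp [unitIdx, hiμ]
  have e2 : (∏ i, zchoose (m i : ℤ) (n i : ℤ) *
      zchoose (n i : ℤ) ((s i : ℤ) - unitIdx μ i)) =
      (zchoose (m μ : ℤ) (n μ : ℤ) * zchoose (n μ : ℤ) ((s μ : ℤ) - 1)) *
        ∏ i ∈ Finset.univ.erase μ,
          zchoose (m i : ℤ) (n i : ℤ) * zchoose (n i : ℤ) (s i : ℤ) := by
    rw [← Finset.mul_prod_erase Finset.univ _ (Finset.mem_univ μ)]
    congr 1
    · simp [unitIdx]
    · refine Finset.prod_congr rfl fun i hi => ?_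
      have hiμ : i ≠ μ := (Finset.mem_erase.mp hi).1
      simp [unitIdx, hiμ]
  have e3 : (∏ i, zchoose (m i : ℤ) (n i : ℤ) * zchoose (n i : ℤ) (s i : ℤ)) =
      (zchoose (m μ : ℤ) (n μ : ℤ) * zchoose (n μ : ℤ) (s μ : ℤ)) *
        ∏ i ∈ Finset.univ.erase μ,
          zchoose (m i : ℤ) (n i : ℤ) * zchoose (n i : ℤ) (s i : ℤ) :=
    (Finset.mul_prod_erase Finset.univ _ (Finset.mem_univ μ)).symm
  rw [e1, e2, e3, zchoose_pascal]
  ring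
end

section
/- The sum over all multi-indices m ∈ ℕ^N with |m| ≤ p of (m_1+1)(m_2+1) (for N ≥ 2, two distinct fixed coordinates) equals (N+p+2 choose N+2). -/
/-- The finset of multi-indices `m : Fin N → ℕ` with `|m| = ∑ i, m i ≤ p`. -/
def multiIdx (N p : ℕ) : Finset (Fin N → ℕ) :=
  (Fintype.piFinset fun _ : Fin N => Finset.range (p + 1)).filter
    fun m => ∑ i, m i ≤ p

lemma mem_multiIdx {N p : ℕ} {m : Fin N → ℕ} :
    m ∈ multiIdx N p ↔ ∑ i, m i ≤ p := by
  simp only [multiIdx, Finset.mem_filter, Fintype.mem_piFinset, Finset.mem_range]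
  refine ⟨fun h => h.2, fun h => ⟨fun i => ?_, h⟩⟩
  exact lt_of_le_of_lt (le_trans (Finset.single_le_sum
    (fun i _ => Nat.zero_le _) (Finset.mem_univ i)) h) (Nat.lt_succ_self p)

/-- Slice off the last coordinate. -/
lemma sum_multiIdx_succ {N p : ℕ} (f : (Fin (N + 1) → ℕ) → ℕ) :
    ∑ m ∈ multiIdx (N + 1) p, f m
      = ∑ k ∈ Finset.range (p + 1), ∑ m ∈ multiIdx N (p - k), f (Fin.snoc m k) := by
  have key : ∑ m ∈ multiIdx (N + 1) p, f m
      = ∑ x ∈ (Finset.range (p + 1)).sigma (fun k => multiIdx N (p - k)),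
          f (Fin.snoc x.2 x.1) := by
    refine Finset.sum_bij' (fun m _ => (⟨m (Fin.last N), Fin.init m⟩ : Σ _ : ℕ, Fin N → ℕ))
      (fun x _ => Fin.snoc x.2 x.1) ?_ ?_ ?_ ?_ ?_
    · intro m hm
      rw [mem_multiIdx] at hm
      rw [Fin.sum_univ_castSucc] at hm
      simp only [Finset.mem_sigma, Finset.mem_range, mem_multiIdx]
      constructor
      · omega
      · simp only [Fin.init]
        omega
    · intro x hx
      simp only [Finset.mem_sigma, Finset.mem_range, mem_multiIdx] at hx
      rw [mem_multiIdx, Fin.sum_univ_castSucc]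
      simp only [Fin.snoc_castSucc, Fin.snoc_last]
      omega
    · intro m _
      exact Fin.snoc_init_self m
    · intro x _
      ext
      · simp
      · simp
    · intro m _
      rw [Fin.snoc_init_self m]
  rw [key, Finset.sum_sigma]

/-- There is exactly one empty multi-index. -/
lemma sum_multiIdx_zero (r : ℕ) (f : (Fin 0 → ℕ) → ℕ) :
    ∑ m ∈ multiIdx 0 r, f m = f (fun i => i.elim0) := by
  apply Finset.sum_eq_single_of_mem
  · rw [mem_multiIdx]; simp
  · intro b _ hb
    exact absurd (funext fun i => i.elim0) hb

/-- Hockey stick. -/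
lemma hockey (r : ℕ) : ∀ p, ∑ k ∈ Finset.range (p + 1), (k + r).choose r
    = (p + r + 1).choose (r + 1) := by
  intro p
  induction p with
  | zero => simp
  | succ p ih =>
    rw [Finset.sum_range_succ, ih]
    have e : p + 1 + r = p + r + 1 := by omega
    rw [e, Nat.choose_succ_succ' (p + r + 1) r]
    omega

/-- Vandermonde convolution. -/
lemma conv (r : ℕ) : ∀ s p, ∑ k ∈ Finset.range (p + 1), (k + r).choose r * ((p - k) + s).choose s
    = (p + r + s + 1).choose (r + s + 1) := by
  intro s
  induction s with
  | zero =>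
    intro p
    simpa using hockey r p
  | succ s ih =>
    intro p
    induction p with
    | zero => simp
    | succ p ihp =>
      have step : ∀ k ∈ Finset.range (p + 2),
          (k + r).choose r * ((p + 1 - k) + (s + 1)).choose (s + 1)
          = (k + r).choose r * ((p + 1 - k) + s).choose s
            + (k + r).choose r * ((p + 1 - k) + s).choose (s + 1) := by
        intro k _
        have : (p + 1 - k) + (s + 1) = ((p + 1 - k) + s) + 1 := by omega
        rw [this, Nat.choose_succ_succ', Nat.mul_add]
      rw [Finset.sum_congr rfl step, Finset.sum_add_distrib]
      have h1 : ∑ k ∈ Finset.range (p + 2),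
          (k + r).choose r * ((p + 1 - k) + s).choose s
          = (p + 1 + r + s + 1).choose (r + s + 1) := ih (p + 1)
      have h2 : ∑ k ∈ Finset.range (p + 2),
          (k + r).choose r * ((p + 1 - k) + s).choose (s + 1)
          = (p + r + (s + 1) + 1).choose (r + (s + 1) + 1) := by
        rw [Finset.sum_range_succ]
        have e0 : (p + 1 - (p + 1)) + s = s := by omega
        rw [e0, Nat.choose_succ_self, Nat.mul_zero, Nat.add_zero, ← ihp]
        apply Finset.sum_congr rfl
        intro k hk
        rw [Finset.mem_range] at hk
        have : p + 1 - k = (p - k) + 1 := by omega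
        rw [this]
        ring_nf
      rw [h1, h2]
      have e1 : p + 1 + r + s + 1 = p + r + s + 2 := by omega
      have e2 : p + r + (s + 1) + 1 = p + r + s + 2 := by omega
      have e3 : r + (s + 1) + 1 = (r + s + 1) + 1 := by omega
      have e4 : p + 1 + r + (s + 1) + 1 = (p + r + s + 2) + 1 := by omega
      rw [e1, e2, e3, e4]
      exact (Nat.choose_succ_succ' (p + r + s + 2) (r + s + 1)).symm

lemma sum1 (q : ℕ) :
    ∑ m ∈ multiIdx 1 q, (m ⟨0, by omega⟩ + 1) = (q + 2).choose 2 := by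
  rw [sum_multiIdx_succ (N := 0) (fun m => m ⟨0, by omega⟩ + 1)]
  have key : ∀ k ∈ Finset.range (q + 1),
      (∑ m ∈ multiIdx 0 (q - k), ((Fin.snoc m k : Fin 1 → ℕ) ⟨0, by omega⟩ + 1))
      = (k + 1).choose 1 := by
    intro k _
    rw [sum_multiIdx_zero]
    have : (Fin.snoc (fun i : Fin 0 => i.elim0) k : Fin 1 → ℕ) ⟨0, by omega⟩ = k := by
      simp [Fin.snoc]
    rw [this, Nat.choose_one_right]
  rw [Finset.sum_congr rfl key, hockey 1 q]

lemma aux : ∀ n p, ∑ m ∈ multiIdx (n + 2) p,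
    (m ⟨0, by omega⟩ + 1) * (m ⟨1, by omega⟩ + 1) = ((n + 2) + p + 2).choose ((n + 2) + 2) := by
  intro n
  induction n with
  | zero =>
    intro p
    rw [sum_multiIdx_succ (N := 1) (fun m => (m ⟨0, by omega⟩ + 1) * (m ⟨1, by omega⟩ + 1))]
    have key : ∀ k ∈ Finset.range (p + 1),
        (∑ m ∈ multiIdx 1 (p - k),
          ((Fin.snoc m k : Fin 2 → ℕ) ⟨0, by omega⟩ + 1)
            * ((Fin.snoc m k : Fin 2 → ℕ) ⟨1, by omega⟩ + 1))
        = (k + 1).choose 1 * ((p - k) + 2).choose 2 := by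
      intro k _
      have e : ∀ m : Fin 1 → ℕ,
          ((Fin.snoc m k : Fin 2 → ℕ) ⟨0, by omega⟩ + 1)
            * ((Fin.snoc m k : Fin 2 → ℕ) ⟨1, by omega⟩ + 1)
          = (m ⟨0, by omega⟩ + 1) * (k + 1) := by
        intro m
        have e0 : (Fin.snoc m k : Fin 2 → ℕ) ⟨0, by omega⟩ = m ⟨0, by omega⟩ := by
          simp only [Fin.snoc, Fin.castLT]
          norm_num
        have e1 : (Fin.snoc m k : Fin 2 → ℕ) ⟨1, by omega⟩ = k := by
          simp [Fin.snoc]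
        rw [e0, e1]
      rw [Finset.sum_congr rfl (fun m _ => e m), ← Finset.sum_mul, sum1,
        Nat.choose_one_right]
      ring
    rw [Finset.sum_congr rfl key, conv 1 2 p]
    have a1 : p + 1 + 2 + 1 = 0 + 2 + p + 2 := by omega
    have a2 : 1 + 2 + 1 = 0 + 2 + 2 := by omega
    rw [a1, a2]
  | succ n ih =>
    intro p
    rw [sum_multiIdx_succ (N := n + 2)
      (fun m => (m ⟨0, by omega⟩ + 1) * (m ⟨1, by omega⟩ + 1))]
    have key : ∀ k ∈ Finset.range (p + 1),
        (∑ m ∈ multiIdx (n + 2) (p - k),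
          ((Fin.snoc m k : Fin (n + 3) → ℕ) ⟨0, by omega⟩ + 1)
            * ((Fin.snoc m k : Fin (n + 3) → ℕ) ⟨1, by omega⟩ + 1))
        = (k + 0).choose 0 * ((p - k) + (n + 4)).choose (n + 4) := by
      intro k _
      have e : ∀ m : Fin (n + 2) → ℕ,
          ((Fin.snoc m k : Fin (n + 3) → ℕ) ⟨0, by omega⟩ + 1)
            * ((Fin.snoc m k : Fin (n + 3) → ℕ) ⟨1, by omega⟩ + 1)
          = (m ⟨0, by omega⟩ + 1) * (m ⟨1, by omega⟩ + 1) := by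
        intro m
        have e0 : (Fin.snoc m k : Fin (n + 3) → ℕ) ⟨0, by omega⟩ = m ⟨0, by omega⟩ := by
          simp only [Fin.snoc, Fin.castLT]
          norm_num
        have e1 : (Fin.snoc m k : Fin (n + 3) → ℕ) ⟨1, by omega⟩ = m ⟨1, by omega⟩ := by
          simp only [Fin.snoc, Fin.castLT]
          norm_num
        rw [e0, e1]
      rw [Finset.sum_congr rfl (fun m _ => e m), ih (p - k)]
      rw [Nat.choose_zero_right, Nat.one_mul]
      have a0 : n + 2 + (p - k) + 2 = (p - k) + (n + 4) := by omega
      have a1 : n + 2 + 2 = n + 4 := by omega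
      rw [a0, a1]
    rw [Finset.sum_congr rfl key, conv 0 (n + 4) p]
    have a1 : p + 0 + (n + 4) + 1 = n + 1 + 2 + p + 2 := by omega
    have a2 : 0 + (n + 4) + 1 = n + 1 + 2 + 2 := by omega
    rw [a1, a2]

theorem sum_multiIdx_two_coords {N p : ℕ} (hN : 2 ≤ N) :
    ∑ m ∈ multiIdx N p, (m ⟨0, by omega⟩ + 1) * (m ⟨1, by omega⟩ + 1) =
      (N + p + 2).choose (N + 2) := by
  obtain ⟨n, rfl⟩ : ∃ n, N = n + 2 := ⟨N - 2, by omega⟩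
  exact aux n p
end

section
/- For all r, p, N ∈ ℕ with r ≤ p, the alternating sum Σ_{i=0}^{r} (-1)^i (r choose i) (N+p-i choose N) equals (N+p-r choose N-r). -/
theorem aux_alt_binom (N : ℕ) : ∀ r p : ℕ, r ≤ p →
    ∑ i ∈ Finset.range (r + 1),
        (-1 : ℤ) ^ i * (r.choose i : ℤ) * ((N + p - i).choose N : ℤ) =
      ((N + p - r).choose p : ℤ) := by
  intro r
  induction r with
  | zero =>
    intro p _
    simp only [zero_add, Finset.sum_range_one, pow_zero, Nat.choose_self,
      Nat.cast_one, one_mul, Nat.sub_zero]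
    rw [show (N + p).choose N = (N + p).choose p by
      rw [← Nat.choose_symm (by omega : N ≤ N + p)]; congr 1; omega]
  | succ r ih =>
    intro p hp
    obtain ⟨q, rfl⟩ : ∃ q, p = q + 1 := ⟨p - 1, by omega⟩
    have hq : r ≤ q := by omega
    rw [Finset.sum_range_succ' (fun i => (-1 : ℤ) ^ i * ((r+1).choose i : ℤ) *
        ((N + (q+1) - i).choose N : ℤ)) (r + 1)]
    have key : ∀ i ∈ Finset.range (r + 1),
        (-1 : ℤ) ^ (i+1) * ((r+1).choose (i+1) : ℤ) * ((N + (q+1) - (i+1)).choose N : ℤ)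
        = -((-1 : ℤ) ^ i * (r.choose i : ℤ) * ((N + q - i).choose N : ℤ))
          + (-1 : ℤ) ^ (i+1) * (r.choose (i+1) : ℤ) * ((N + (q+1) - (i+1)).choose N : ℤ) := by
      intro i hi
      have h1 : N + (q+1) - (i+1) = N + q - i := by omega
      rw [h1, Nat.choose_succ_succ]
      push_cast
      ring
    rw [Finset.sum_congr rfl key, Finset.sum_add_distrib, Finset.sum_neg_distrib]
    rw [ih q hq]
    have h2 : (∑ i ∈ Finset.range (r + 1), (-1 : ℤ) ^ (i+1) * (r.choose (i+1) : ℤ) *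
          ((N + (q+1) - (i+1)).choose N : ℤ))
        + (-1 : ℤ) ^ 0 * ((r+1).choose 0 : ℤ) * ((N + (q+1) - 0).choose N : ℤ)
        = ∑ i ∈ Finset.range (r + 2), (-1 : ℤ) ^ i * (r.choose i : ℤ) *
          ((N + (q+1) - i).choose N : ℤ) := by
      rw [Finset.sum_range_succ' (fun i => (-1 : ℤ) ^ i * (r.choose i : ℤ) *
        ((N + (q+1) - i).choose N : ℤ)) (r + 1)]
      simp
    rw [add_assoc, h2, Finset.sum_range_succ, Nat.choose_succ_self]
    rw [ih (q+1) (by omega)]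
    have h3 : N + (q+1) - r = (N + q - r) + 1 := by omega
    have h4 : N + (q+1) - (r+1) = N + q - r := by omega
    rw [h3, h4, Nat.choose_succ_succ]
    push_cast
    ring

theorem alternating_binomial_sum (r p N : ℕ) (hrp : r ≤ p) :
    ∑ i ∈ Finset.range (r + 1),
        (-1 : ℤ) ^ i * (r.choose i : ℤ) * ((N + p - i).choose N : ℤ) =
      if r ≤ N then ((N + p - r).choose (N - r) : ℤ) else 0 := by
  rw [aux_alt_binom N r p hrp]
  split_ifs with h
  · congr 1
    rw [← Nat.choose_symm (by omega : p ≤ N + p - r)]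
    congr 1
    omega
  · rw [Nat.choose_eq_zero_of_lt (by omega)]
    simp
end
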